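/- The linearly ordered set ℚ of rational numbers with its usual order is ultrahomogeneous: every order isomorphism between two finite subsets of ℚ extends to an order automorphism of ℚ. -/

import Mathlib

private lemma rat_bump (c a b : ℚ) (hca : c < a) (hcb : c < b) :
    ∃ h : ℚ ≃o ℚ, (∀ x ≤ c, h x = x) ∧ h a = b := by
  set F : ℚ → ℚ := fun x =>
    if x ≤ c then x else if x ≤ a then c + (x - c) * (b - c) / (a - c) else x + (b - a) with hF
  have hac : (0:ℚ) < a - c := by linarith
  have hbc : (0:ℚ) < b - c := by linarith
  have keylo : ∀ z : ℚ, c < z → c < c + (z - c) * (b - c) / (a - c) := by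
    intro z hz
    have := div_pos (mul_pos (by linarith : (0:ℚ) < z - c) hbc) hac
    linarith
  have keyhi : ∀ z : ℚ, z ≤ a → c + (z - c) * (b - c) / (a - c) ≤ b := by
    intro z hz
    have h1 : (z - c) * (b - c) / (a - c) ≤ (a - c) * (b - c) / (a - c) := by
      gcongr <;> linarith
    have h2 : (a - c) * (b - c) / (a - c) = b - c :=
      mul_div_cancel_left₀ _ (ne_of_gt hac)
    linarith
  have keymono : ∀ z w : ℚ, z < w →
      c + (z - c) * (b - c) / (a - c) < c + (w - c) * (b - c) / (a - c) := by
    intro z w hzw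
    have h1 : (0:ℚ) < (w - z) * (b - c) / (a - c) :=
      div_pos (mul_pos (by linarith) hbc) hac
    have h2 : c + (w - c) * (b - c) / (a - c)
        = (c + (z - c) * (b - c) / (a - c)) + (w - z) * (b - c) / (a - c) := by ring
    linarith
  have hFa : F a = b := by
    simp only [hF]
    rw [if_neg (by linarith), if_pos le_rfl]
    field_simp
    ring
  have hmono : StrictMono F := by
    intro x y hxy
    simp only [hF]
    split_ifs <;> (try push_neg at *) <;>
      first
      | linarith
      | (have := keylo y (by linarith); linarith)
      | exact keymono x y hxy
      | (have := keyhi x (by linarith); linarith)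
  have hsurj : Function.Surjective F := by
    intro y
    by_cases h1 : y ≤ c
    · exact ⟨y, by simp only [hF]; rw [if_pos h1]⟩
    · push_neg at h1
      by_cases h2 : y ≤ b
      · refine ⟨c + (y - c) * (a - c) / (b - c), ?_⟩
        have hg1 : c < c + (y - c) * (a - c) / (b - c) := by
          have := div_pos (mul_pos (by linarith : (0:ℚ) < y - c) hac) hbc
          linarith
        have hg2 : c + (y - c) * (a - c) / (b - c) ≤ a := by
          have h3 : (y - c) * (a - c) / (b - c) ≤ (b - c) * (a - c) / (b - c) := by
            gcongr <;> linarith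
          have h4 : (b - c) * (a - c) / (b - c) = a - c :=
            mul_div_cancel_left₀ _ (ne_of_gt hbc)
          linarith
        simp only [hF]
        rw [if_neg (by linarith), if_pos hg2]
        field_simp
        ring
      · push_neg at h2
        refine ⟨y + (a - b), ?_⟩
        simp only [hF]
        rw [if_neg (by linarith), if_neg (by linarith)]
        ring
  refine ⟨StrictMono.orderIsoOfSurjective F hmono hsurj, ?_, ?_⟩
  · intro x hx
    rw [StrictMono.coe_orderIsoOfSurjective]
    simp only [hF]
    rw [if_pos hx]
  · rw [StrictMono.coe_orderIsoOfSurjective]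
    exact hFa

/-- ℚ is ultrahomogeneous: every order-preserving map on a finite subset of ℚ
extends to an order automorphism of ℚ. -/
theorem rat_ultrahomogeneous (s : Finset ℚ) (f : ℚ → ℚ)
    (hf : ∀ x ∈ s, ∀ y ∈ s, x < y → f x < f y) :
    ∃ g : ℚ ≃o ℚ, ∀ x ∈ s, g x = f x := by
  induction s using Finset.induction_on_max with
  | empty => exact ⟨OrderIso.refl ℚ, by simp⟩
  | insert a s ha ih =>
    obtain ⟨g, hg⟩ := ih (fun x hx y hy hxy =>
      hf x (Finset.mem_insert_of_mem hx) y (Finset.mem_insert_of_mem hy) hxy)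
    rcases s.eq_empty_or_nonempty with rfl | hne
    · refine ⟨(OrderIso.addRight (f a - a) : ℚ ≃o ℚ), ?_⟩
      intro x hx
      simp only [Finset.mem_insert, Finset.notMem_empty, or_false] at hx
      subst hx
      simp [OrderIso.addRight_apply]
    · set m := s.max' hne with hm
      have hms : m ∈ s := s.max'_mem hne
      have hma : m < a := ha m hms
      have hc1 : f m < g a := by
        have := g.strictMono hma
        rwa [hg m hms] at this
      have hc2 : f m < f a :=
        hf m (Finset.mem_insert_of_mem hms) a (Finset.mem_insert_self a s) hma
      obtain ⟨h, hfix, hab⟩ := rat_bump (f m) (g a) (f a) hc1 hc2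
      refine ⟨g.trans h, ?_⟩
      intro x hx
      rcases Finset.mem_insert.mp hx with rfl | hxs
      · simpa using hab
      · have hxle : f x ≤ f m := by
          rcases eq_or_lt_of_le (s.le_max' x hxs) with heq | hlt
          · rw [heq]
          · exact le_of_lt (hf x (Finset.mem_insert_of_mem hxs) m
              (Finset.mem_insert_of_mem hms) hlt)
        simp only [OrderIso.trans_apply]
        rw [hg x hxs, hfix (f x) hxle]
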